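/- arXiv:1008.1117 — 3 statements merged into one kernel-verified Lean document; each statement's English description precedes it below -/
import Mathlib

section
/- Let V be a finite-dimensional vector space over a field k and let x ∈ End(V). With respect to the trace form B(y, z) = tr(yz) on End(V), the orthogonal complement of the centralizer E^x = {y ∈ End(V) : yx = xy} equals the image of ad x, i.e., (E^x)^⊥ = {[y, x] : y ∈ End(V)}. -/
open Module LinearMap

lemma trace_mul_stdBasisMatrix {n : ℕ} {k : Type*} [Field k]
    (M : Matrix (Fin n) (Fin n) k) (i j : Fin n) :
    (M * Matrix.single j i (1:k)).trace = M i j := by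
  simp [Matrix.trace, Matrix.mul_apply, Matrix.single, Matrix.diag, ite_and]

/-- The trace form `(y, z) ↦ tr (y * z)` on `End V` is nondegenerate. -/
lemma traceForm_end_nondegenerate (k V : Type*) [Field k] [AddCommGroup V] [Module k V]
    [FiniteDimensional k V] (y : Module.End k V)
    (h : ∀ z : Module.End k V, LinearMap.trace k V (y * z) = 0) : y = 0 := by
  classical
  let b := Module.finBasis k V
  set n := Module.finrank k V
  have key : ∀ i j : Fin n, LinearMap.toMatrix b b y i j = 0 := by
    intro i j
    have := h ((LinearMap.toMatrix b b).symm (Matrix.single j i 1))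
    rw [LinearMap.trace_eq_matrix_trace k b, LinearMap.toMatrix_mul,
      LinearEquiv.apply_symm_apply, trace_mul_stdBasisMatrix] at this
    exact this
  have : LinearMap.toMatrix b b y = 0 := by
    ext i j; exact key i j
  have := congrArg (LinearMap.toMatrix b b).symm this
  simpa using this

/-- The orthogonal complement of the centralizer of `x` under the trace form on
`End(V)` is the image of `ad x`. -/
theorem stmt_6 (k V : Type*) [Field k] [AddCommGroup V] [Module k V]
    [FiniteDimensional k V] (x : Module.End k V) :
    {z : Module.End k V | ∀ y : Module.End k V, y * x = x * y →
        LinearMap.trace k V (y * z) = 0}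
      = Set.range (fun y : Module.End k V => y * x - x * y) := by
  classical
  let E := Module.End k V
  -- the trace form
  let B : LinearMap.BilinForm k E :=
    (LinearMap.mul k E).compr₂ (LinearMap.trace k V)
  have hBapp : ∀ y z : E, B y z = LinearMap.trace k V (y * z) := fun y z => rfl
  have hrefl : B.IsRefl := by
    intro y z h
    rw [hBapp] at h ⊢
    rw [show z * y = z ∘ₗ y from rfl, LinearMap.trace_comp_comm']
    rwa [show y * z = y ∘ₗ z from rfl] at h
  have hnd : B.Nondegenerate := by
    refine (LinearMap.IsRefl.nondegenerate_iff_separatingLeft hrefl).mpr ?_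
    intro y h
    exact traceForm_end_nondegenerate k V y (fun z => h z)
  -- the operator ad x
  let T : E →ₗ[k] E := LinearMap.mulRight k x - LinearMap.mulLeft k x
  have hTapp : ∀ y : E, T y = y * x - x * y := fun y => rfl
  have hker : ∀ y : E, y ∈ LinearMap.ker T ↔ y * x = x * y := by
    intro y
    rw [LinearMap.mem_ker, hTapp, sub_eq_zero]
  -- range T ≤ orthogonal of ker T
  have hle : LinearMap.range T ≤ B.orthogonal (LinearMap.ker T) := by
    rintro _ ⟨w, rfl⟩ y hy
    have hyx : y * x = x * y := (hker y).mp hy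
    show B y (T w) = 0
    rw [hBapp, hTapp, mul_sub, map_sub]
    have h1 : y * (w * x) = (y * w) * x := by rw [mul_assoc]
    have h2 : y * (x * w) = (x * y) * w := by rw [← hyx, mul_assoc]
    rw [h1, h2]
    rw [show (y * w) * x = (y * w) ∘ₗ x from rfl, show (x * y) * w = x ∘ₗ (y * w) from rfl,
      LinearMap.trace_comp_comm']
    ring
  -- equality by dimension count
  have heq : B.orthogonal (LinearMap.ker T) = LinearMap.range T := by
    refine (Submodule.eq_of_le_of_finrank_le hle ?_).symm
    rw [LinearMap.BilinForm.finrank_orthogonal hnd]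
    have h1 := LinearMap.finrank_range_add_finrank_ker T
    omega
  -- conclude
  ext z
  simp only [Set.mem_setOf_eq, Set.mem_range]
  constructor
  · intro hz
    have : z ∈ B.orthogonal (LinearMap.ker T) := by
      intro y hy
      exact hz y ((hker y).mp hy)
    rw [heq] at this
    obtain ⟨w, hw⟩ := this
    exact ⟨w, hw⟩
  · rintro ⟨w, rfl⟩
    intro y hy
    have : (w * x - x * w) ∈ LinearMap.range T := ⟨w, rfl⟩
    rw [← heq] at this
    exact this y ((hker y).mpr hy)
end

section
/- Let V be a vector space with basis {v_{ij} : 1 ≤ i ≤ ℓ, 1 ≤ j ≤ λ_i}, x the nilpotent with x v_{ij} = v_{i,j−1}, and v = Σ_i v_{i,ρ_i} where ρ_i ≤ λ_i (with v_{i,0} := 0, terms with ρ_i = 0 omitted). For t ∈ kˣ let g_t ∈ GL(V) be defined by g_t v_{ij} = t^{j−ρ_i−1} v_{ij}, and let (g_t, t) act on V by (g, c)·w = g w. Then the pair (g_t, t) fixes the enhanced point (v, x) for the action (g,c)·(w, y) = (g w, c·g y g^{−1}); more concretely, g_t v = t^{−1} v and g_t x g_t^{−1} = t^{−1} x. -/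
/-- With `v = ∑ v_{i,ρ_i}` (terms with `ρ_i = 0` omitted; `j` zero-based, so
`v_{i,ρ_i} = b ⟨i, ρ_i - 1⟩`), the pair `(g_t, t)` fixes the enhanced point
`(v, x)` for the action `(g,c)·(w,y) = (c·gw, c·gyg⁻¹)`; concretely,
`g_t v = t⁻¹ v` and `g_t x g_t⁻¹ = t⁻¹ x`. -/
theorem stmt_13 (k V : Type*) [Field k] [AddCommGroup V] [Module k V]
    (ℓ : ℕ) (lam : Fin ℓ → ℕ)
    (b : Module.Basis ((i : Fin ℓ) × Fin (lam i)) k V)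
    (x : Module.End k V)
    (hx : ∀ (i : Fin ℓ) (j : Fin (lam i)), x (b ⟨i, j⟩) =
      if h : 1 ≤ (j : ℕ) then
        b ⟨i, ⟨(j : ℕ) - 1, Nat.lt_of_le_of_lt (Nat.sub_le _ _) j.isLt⟩⟩ else 0)
    (ρ : Fin ℓ → ℕ) (hρ : ∀ i, ρ i ≤ lam i)
    (v : V)
    (hv : v = ∑ i : Fin ℓ,
      if h : 1 ≤ ρ i then b ⟨i, ⟨ρ i - 1, by have := hρ i; omega⟩⟩ else 0)
    (t : kˣ) (g : V ≃ₗ[k] V)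
    (hg : ∀ (i : Fin ℓ) (j : Fin (lam i)),
      g (b ⟨i, j⟩) = ((t : k) ^ (((j : ℕ) : ℤ) - (ρ i : ℤ))) • b ⟨i, j⟩) :
    g v = (t : k)⁻¹ • v ∧
    g.toLinearMap ∘ₗ x ∘ₗ g.symm.toLinearMap = (t : k)⁻¹ • x ∧
    (t : k) • (g v) = v ∧
    (t : k) • (g.toLinearMap ∘ₗ x ∘ₗ g.symm.toLinearMap) = x := by

  have ht : (t : k) ≠ 0 := t.ne_zero
  have hgv : g v = (t : k)⁻¹ • v := by
    rw [hv, map_sum, Finset.smul_sum]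
    refine Finset.sum_congr rfl fun i _ => ?_
    by_cases h : 1 ≤ ρ i
    · rw [dif_pos h, hg]
      congr 1
      have hc : (((ρ i - 1 : ℕ) : ℤ)) - (ρ i : ℤ) = -1 := by omega
      rw [show ((⟨ρ i - 1, by have := hρ i; omega⟩ : Fin (lam i)) : ℕ) = ρ i - 1 from rfl,
        hc, zpow_neg_one]
    · rw [dif_neg h, map_zero, smul_zero]
  have hcomp : g.toLinearMap ∘ₗ x = ((t : k)⁻¹ • x) ∘ₗ g.toLinearMap := by
    apply b.ext
    rintro ⟨i, j⟩
    simp only [LinearMap.comp_apply, LinearEquiv.coe_coe, LinearMap.smul_apply]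
    rw [hg, map_smul, hx]
    by_cases h : 1 ≤ (j : ℕ)
    · rw [dif_pos h, hg, smul_smul]
      congr 1
      have hc : (((j : ℕ) - 1 : ℕ) : ℤ) = (j : ℕ) - 1 := by omega
      rw [show ((⟨(j : ℕ) - 1, Nat.lt_of_le_of_lt (Nat.sub_le _ _) j.isLt⟩ :
        Fin (lam i)) : ℕ) = (j : ℕ) - 1 from rfl, hc, sub_right_comm,
        zpow_sub_one₀ ht]
      ring
    · rw [dif_neg h, map_zero, smul_zero, smul_zero]
  have hconj : g.toLinearMap ∘ₗ x ∘ₗ g.symm.toLinearMap = (t : k)⁻¹ • x := by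
    rw [← LinearMap.comp_assoc, hcomp, LinearMap.comp_assoc]
    ext w
    simp
  refine ⟨hgv, hconj, ?_, ?_⟩
  · rw [hgv, smul_smul, mul_inv_cancel₀ ht, one_smul]
  · rw [hconj, smul_smul, mul_inv_cancel₀ ht, one_smul]
end

section
/- Let q ≥ 2 be an integer and, for each i in a finite range 0 ≤ i ≤ N, let A_i be a finite multiset of complex numbers each of absolute value q^{i/2} (all conjugates condition simplified to: each α ∈ A_i satisfies |α| = q^{i/2}). Suppose there is a polynomial P ∈ ℤ[t] such that Σ_{i=0}^{N} (−1)^i Σ_{α ∈ A_i} α^s = P(q^s) for all integers s ≥ 1. Then A_i = ∅ for all odd i, every α ∈ A_i with i even equals q^{i/2}, and P(t) = Σ_{i even} |A_i| t^{i/2}; in particular P has nonnegative integer coefficients. -/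
open Finset

/-- Linear independence of geometric sequences: if a finite combination of
geometric sequences vanishes at every exponent, all coefficients vanish. -/
private lemma vand_aux : ∀ (S : Finset ℂ) (c : ℂ → ℂ),
    (∀ s : ℕ, ∑ α ∈ S, c α * α ^ s = 0) → ∀ α ∈ S, c α = 0 := by
  intro S
  induction S using Finset.induction_on with
  | empty => intro c _ α hα; simp at hα
  | insert β S hβ ih =>
    intro c h α hα
    have h' : ∀ s : ℕ, ∑ α ∈ S, (c α * (α - β)) * α ^ s = 0 := by
      intro s
      have h1 := h (s + 1); have h2 := h s
      rw [Finset.sum_insert hβ] at h1 h2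
      have e1 : ∑ α ∈ S, (c α * (α - β)) * α ^ s
          = (∑ α ∈ S, c α * α ^ (s + 1)) - β * ∑ α ∈ S, c α * α ^ s := by
        rw [Finset.mul_sum, ← Finset.sum_sub_distrib]
        exact Finset.sum_congr rfl fun α _ => by ring
      rw [e1]
      linear_combination h1 - β * h2
    have hz : ∀ γ ∈ S, c γ * (γ - β) = 0 := ih _ h'
    rcases Finset.mem_insert.mp hα with hb | hαS
    · subst hb
      have h0 := h 0
      rw [Finset.sum_insert hβ] at h0
      have hrest : ∑ γ ∈ S, c γ * γ ^ 0 = 0 := by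
        apply Finset.sum_eq_zero
        intro γ hγ
        have hne : γ ≠ α := fun h => hβ (h ▸ hγ)
        rcases mul_eq_zero.mp (hz γ hγ) with h' | h'
        · simp [h']
        · exact absurd (sub_eq_zero.mp h') hne
      rw [hrest, add_zero, pow_zero, mul_one] at h0
      exact h0
    · have hne : α ≠ β := fun h => hβ (h ▸ hαS)
      rcases mul_eq_zero.mp (hz α hαS) with h' | h'
      · exact h'
      · exact absurd (sub_eq_zero.mp h') hne

/-- Purity and the trace formula force even-degree cohomology with Frobenius
eigenvalues `q^{i/2}`, and a point-counting polynomial with nonnegative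
coefficients. -/
theorem stmt_14 (q : ℕ) (hq : 2 ≤ q) (N : ℕ) (A : ℕ → Multiset ℂ)
    (habs : ∀ i ≤ N, ∀ α ∈ A i, ‖α‖ = Real.sqrt q ^ i)
    (P : Polynomial ℤ)
    (hP : ∀ s : ℕ, 1 ≤ s →
      ∑ i ∈ Finset.range (N + 1), (-1 : ℂ) ^ i * ((A i).map (fun α => α ^ s)).sum
        = Polynomial.aeval ((q : ℂ) ^ s) P) :
    (∀ i ≤ N, Odd i → A i = 0) ∧
    (∀ i ≤ N, Even i → ∀ α ∈ A i, α = ((Real.sqrt q : ℂ)) ^ i) ∧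
    (P = ∑ i ∈ Finset.range (N + 1),
        if Even i then Polynomial.C ((Multiset.card (A i) : ℤ)) * Polynomial.X ^ (i / 2)
        else 0) ∧
    (∀ n : ℕ, 0 ≤ P.coeff n) := by
  classical
  set D := P.natDegree with hD
  have hq1R : (1 : ℝ) < (q : ℝ) := by exact_mod_cast Nat.lt_of_lt_of_le one_lt_two hq
  have hq0R : (0 : ℝ) ≤ (q : ℝ) := by positivity
  have hq1 : (1 : ℝ) < Real.sqrt q := by
    rw [show (1:ℝ) = Real.sqrt 1 from Real.sqrt_one.symm]
    exact Real.sqrt_lt_sqrt (by norm_num) hq1R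
  have hinj : ∀ i j : ℕ, Real.sqrt q ^ i = Real.sqrt q ^ j → i = j :=
    fun i j h => (pow_right_strictMono₀ hq1).injective h
  have hsq : Real.sqrt q ^ 2 = (q : ℝ) := Real.sq_sqrt hq0R
  have hpow2 : ∀ n : ℕ, Real.sqrt q ^ (2 * n) = (q : ℝ) ^ n := by
    intro n; rw [pow_mul, hsq]
  have habsq : ∀ n : ℕ, ‖(q : ℂ) ^ n‖ = (q : ℝ) ^ n := by
    intro n; rw [norm_pow, Complex.norm_natCast]
  have hqinj : ∀ a b : ℕ, (q : ℂ) ^ a = (q : ℂ) ^ b → a = b := by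
    intro a b h
    have : (q : ℝ) ^ a = (q : ℝ) ^ b := by
      rw [← habsq a, ← habsq b, h]
    exact (pow_right_strictMono₀ hq1R).injective this
  have hcast : ∀ n : ℕ, ((Real.sqrt q : ℝ) : ℂ) ^ (2 * n) = (q : ℂ) ^ n := by
    intro n
    rw [← Complex.ofReal_pow, hpow2]
    norm_cast
  -- the combined finite support and the combined coefficient function
  set S : Finset ℂ :=
    ((Finset.range (N + 1)).biUnion (fun i => (A i).toFinset)) ∪
      ((Finset.range (D + 1)).image (fun n => (q : ℂ) ^ n)) with hS
  set c : ℂ → ℂ := fun α =>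
    (∑ i ∈ Finset.range (N + 1), (-1 : ℂ) ^ i * ((A i).count α : ℂ)) -
      ∑ n ∈ Finset.range (D + 1), (if α = (q : ℂ) ^ n then (P.coeff n : ℂ) else 0) with hc
  have hS0 : ∀ α ∈ S, α ≠ 0 := by
    intro α hα
    rcases Finset.mem_union.mp hα with h | h
    · obtain ⟨i, hi, hmem⟩ := Finset.mem_biUnion.mp h
      have hle : i ≤ N := Nat.lt_succ_iff.mp (Finset.mem_range.mp hi)
      intro h0
      have h1 := habs i hle α (Multiset.mem_toFinset.mp hmem)
      rw [h0, norm_zero] at h1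
      have h2 : (0:ℝ) < Real.sqrt q ^ i := pow_pos (lt_trans one_pos hq1) i
      exact (ne_of_gt h2) h1.symm
    · obtain ⟨n, _, hn⟩ := Finset.mem_image.mp h
      rw [← hn]
      exact pow_ne_zero _ (Nat.cast_ne_zero.mpr (by omega))
  -- the trace identity in grouped form
  have hsum : ∀ s : ℕ, 1 ≤ s → ∑ α ∈ S, c α * α ^ s = 0 := by
    intro s hs
    have hPs := hP s hs
    have e1 : ∀ i ∈ Finset.range (N + 1),
        ((A i).map (fun α => α ^ s)).sum = ∑ α ∈ S, ((A i).count α : ℂ) * α ^ s := by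
      intro i hi
      have hsub : (A i).toFinset ⊆ S := fun x hx =>
        Finset.mem_union_left _ (Finset.mem_biUnion.mpr ⟨i, hi, hx⟩)
      rw [Finset.sum_multiset_map_count,
        Finset.sum_subset hsub (fun x _ hx => by
          rw [Multiset.count_eq_zero_of_notMem (fun hm => hx (Multiset.mem_toFinset.mpr hm))]
          simp)]
      exact Finset.sum_congr rfl fun α _ => by rw [nsmul_eq_mul]
    have e2 : (Polynomial.aeval ((q : ℂ) ^ s)) P
        = ∑ n ∈ Finset.range (D + 1), (P.coeff n : ℂ) * ((q : ℂ) ^ n) ^ s := by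
      rw [Polynomial.aeval_eq_sum_range]
      refine Finset.sum_congr rfl fun n _ => ?_
      rw [zsmul_eq_mul, ← pow_mul, ← pow_mul, mul_comm s n]
    have e3 : ∀ n ∈ Finset.range (D + 1),
        (∑ α ∈ S, (if α = (q : ℂ) ^ n then (P.coeff n : ℂ) else 0) * α ^ s)
          = (P.coeff n : ℂ) * ((q : ℂ) ^ n) ^ s := by
      intro n hn
      have hmem : (q : ℂ) ^ n ∈ S :=
        Finset.mem_union_right _ (Finset.mem_image_of_mem _ hn)
      simp only [ite_mul, zero_mul]
      rw [Finset.sum_ite_eq' S ((q : ℂ) ^ n) (fun α => (P.coeff n : ℂ) * α ^ s), if_pos hmem]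
    calc ∑ α ∈ S, c α * α ^ s
        = (∑ i ∈ Finset.range (N + 1), (-1:ℂ)^i * ((A i).map (fun α => α ^ s)).sum)
          - (Polynomial.aeval ((q : ℂ) ^ s)) P := by
          rw [e2]
          simp only [hc, sub_mul, Finset.sum_sub_distrib, Finset.sum_mul]
          congr 1
          · rw [Finset.sum_comm]
            refine Finset.sum_congr rfl fun i hi => ?_
            rw [e1 i hi, Finset.mul_sum]
            exact Finset.sum_congr rfl fun α _ => by ring
          · rw [Finset.sum_comm]
            exact Finset.sum_congr rfl fun n hn => e3 n hn
      _ = 0 := by rw [hPs, sub_self]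
  have hc0 : ∀ α ∈ S, c α = 0 := by
    intro α hα
    have hv := vand_aux S (fun α => c α * α) (fun s => by
      have h1 := hsum (s + 1) (Nat.le_add_left 1 s)
      rw [← h1]
      exact Finset.sum_congr rfl fun α _ => by ring)
    exact (mul_eq_zero.mp (hv α hα)).resolve_right (hS0 α hα)
  have hkey : ∀ α : ℂ,
      (∑ i ∈ Finset.range (N + 1), (-1 : ℂ) ^ i * ((A i).count α : ℂ))
        = ∑ n ∈ Finset.range (D + 1), (if α = (q : ℂ) ^ n then (P.coeff n : ℂ) else 0) := by
    intro α
    by_cases hα : α ∈ S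
    · exact sub_eq_zero.mp (hc0 α hα)
    · have hL : (∑ i ∈ Finset.range (N + 1), (-1 : ℂ) ^ i * ((A i).count α : ℂ)) = 0 := by
        refine Finset.sum_eq_zero fun i hi => ?_
        rw [Multiset.count_eq_zero_of_notMem, Nat.cast_zero, mul_zero]
        intro hm
        exact hα (Finset.mem_union_left _
          (Finset.mem_biUnion.mpr ⟨i, hi, Multiset.mem_toFinset.mpr hm⟩))
      have hR : (∑ n ∈ Finset.range (D + 1),
          (if α = (q : ℂ) ^ n then (P.coeff n : ℂ) else 0)) = 0 := by
        refine Finset.sum_eq_zero fun n hn => ?_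
        rw [if_neg]
        intro he
        exact hα (he ▸ Finset.mem_union_right _ (Finset.mem_image_of_mem _ hn))
      rw [hL, hR]
  have hLsingle : ∀ (α : ℂ) (i : ℕ), i ≤ N → α ∈ A i →
      (∑ j ∈ Finset.range (N + 1), (-1 : ℂ) ^ j * ((A j).count α : ℂ))
        = (-1 : ℂ) ^ i * ((A i).count α : ℂ) := by
    intro α i hi hmem
    refine Finset.sum_eq_single i (fun j hj hji => ?_)
      (fun hni => absurd (Finset.mem_range.mpr (Nat.lt_succ_of_le hi)) hni)
    have hjN : j ≤ N := Nat.lt_succ_iff.mp (Finset.mem_range.mp hj)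
    rw [Multiset.count_eq_zero_of_notMem, Nat.cast_zero, mul_zero]
    intro hm
    exact hji (hinj j i (by rw [← habs j hjN α hm, habs i hi α hmem]))
  have hcountzero : ∀ (α : ℂ) (i : ℕ), α ∈ A i →
      (-1 : ℂ) ^ i * ((A i).count α : ℂ) = 0 → False := by
    intro α i hα hk
    have hcnt : (A i).count α = 0 := by
      have : ((A i).count α : ℂ) = 0 :=
        (mul_eq_zero.mp hk).resolve_left (pow_ne_zero _ (by norm_num))
      exact_mod_cast this
    exact (Multiset.count_pos.mpr hα).ne' hcnt
  have part1 : ∀ i ≤ N, Odd i → A i = 0 := by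
    intro i hi hodd
    rw [Multiset.eq_zero_iff_forall_notMem]
    intro α hα
    have hk := hkey α
    rw [hLsingle α i hi hα] at hk
    have hR : (∑ n ∈ Finset.range (D + 1),
        (if α = (q : ℂ) ^ n then (P.coeff n : ℂ) else 0)) = 0 := by
      refine Finset.sum_eq_zero fun n _ => ?_
      rw [if_neg]
      intro he
      have h1 : Real.sqrt q ^ i = Real.sqrt q ^ (2 * n) := by
        rw [hpow2, ← habsq n, ← he]
        exact (habs i hi α hα).symm
      have h2 := hinj i (2 * n) h1
      obtain ⟨k, hk'⟩ := hodd
      omega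
    rw [hR] at hk
    exact hcountzero α i hα hk
  have part2 : ∀ i ≤ N, Even i → ∀ α ∈ A i, α = ((Real.sqrt q : ℝ) : ℂ) ^ i := by
    intro i hi heven α hα
    by_contra hne
    have hk := hkey α
    rw [hLsingle α i hi hα] at hk
    have hR : (∑ n ∈ Finset.range (D + 1),
        (if α = (q : ℂ) ^ n then (P.coeff n : ℂ) else 0)) = 0 := by
      refine Finset.sum_eq_zero fun n _ => ?_
      rw [if_neg]
      intro he
      have h1 : Real.sqrt q ^ i = Real.sqrt q ^ (2 * n) := by
        rw [hpow2, ← habsq n, ← he]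
        exact (habs i hi α hα).symm
      have h2 := hinj i (2 * n) h1
      apply hne
      rw [he, ← hcast n, h2]
    rw [hR] at hk
    exact hcountzero α i hα hk
  have hcoeff : ∀ n : ℕ,
      P.coeff n = if 2 * n ≤ N then (Multiset.card (A (2 * n)) : ℤ) else 0 := by
    intro n
    have hk := hkey ((q : ℂ) ^ n)
    have hR : (∑ m ∈ Finset.range (D + 1),
        (if (q:ℂ)^n = (q:ℂ)^m then (P.coeff m : ℂ) else 0)) = (P.coeff n : ℂ) := by
      rw [Finset.sum_congr rfl (fun m _ =>
        show (if (q:ℂ)^n = (q:ℂ)^m then (P.coeff m : ℂ) else 0)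
            = (if n = m then (P.coeff m : ℂ) else 0) by
          by_cases h : n = m
          · subst h; simp
          · rw [if_neg (fun he => h (hqinj n m he)), if_neg h])]
      rw [Finset.sum_ite_eq]
      by_cases hn : n ∈ Finset.range (D + 1)
      · rw [if_pos hn]
      · rw [if_neg hn]
        have hlt : D < n := by
          by_contra h
          exact hn (Finset.mem_range.mpr (by omega))
        rw [Polynomial.coeff_eq_zero_of_natDegree_lt hlt, Int.cast_zero]
    have hjz : ∀ j ∈ Finset.range (N+1), j ≠ 2 * n →
        (-1:ℂ)^j * ((A j).count ((q:ℂ)^n) : ℂ) = 0 := by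
      intro j hj hjn
      have hjN : j ≤ N := Nat.lt_succ_iff.mp (Finset.mem_range.mp hj)
      rw [Multiset.count_eq_zero_of_notMem, Nat.cast_zero, mul_zero]
      intro hm
      have h1 : Real.sqrt q ^ j = Real.sqrt q ^ (2*n) := by
        rw [hpow2, ← habsq n]
        exact (habs j hjN _ hm).symm
      exact hjn (hinj j (2*n) h1)
    have hL : (∑ j ∈ Finset.range (N + 1), (-1 : ℂ) ^ j * ((A j).count ((q:ℂ)^n) : ℂ))
        = if 2 * n ≤ N then ((Multiset.card (A (2 * n)) : ℂ)) else 0 := by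
      by_cases h2n : 2 * n ≤ N
      · rw [if_pos h2n]
        rw [Finset.sum_eq_single (2*n) hjz
          (fun hni => absurd (Finset.mem_range.mpr (by omega)) hni)]
        have hcard : (A (2*n)).count ((q:ℂ)^n) = Multiset.card (A (2*n)) := by
          rw [Multiset.count_eq_card]
          intro x hx
          rw [part2 (2*n) h2n (even_two_mul n) x hx, hcast n]
        rw [hcard, pow_mul]
        norm_num
      · rw [if_neg h2n]
        exact Finset.sum_eq_zero (fun j hj => hjz j hj
          (by have := Nat.lt_succ_iff.mp (Finset.mem_range.mp hj); omega))
    rw [hL, hR] at hk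
    by_cases h2n : 2 * n ≤ N
    · rw [if_pos h2n] at hk ⊢
      exact_mod_cast hk.symm
    · rw [if_neg h2n] at hk ⊢
      exact_mod_cast hk.symm
  refine ⟨part1, part2, ?_, ?_⟩
  · apply Polynomial.ext
    intro n
    rw [hcoeff n, Polynomial.finset_sum_coeff]
    by_cases h2n : 2 * n ≤ N
    · rw [if_pos h2n]
      rw [Finset.sum_eq_single_of_mem (2*n) (Finset.mem_range.mpr (by omega))]
      · rw [if_pos (even_two_mul n), Polynomial.coeff_C_mul, Polynomial.coeff_X_pow,
          if_pos (by omega : n = 2*n/2), mul_one]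
      · intro i hi hne
        by_cases hev : Even i
        · rw [if_pos hev, Polynomial.coeff_C_mul, Polynomial.coeff_X_pow, if_neg, mul_zero]
          obtain ⟨k, hk⟩ := hev
          omega
        · rw [if_neg hev, Polynomial.coeff_zero]
    · rw [if_neg h2n]
      refine (Finset.sum_eq_zero fun i hi => ?_).symm
      by_cases hev : Even i
      · rw [if_pos hev, Polynomial.coeff_C_mul, Polynomial.coeff_X_pow, if_neg, mul_zero]
        obtain ⟨k, hk⟩ := hev
        have := Finset.mem_range.mp hi
        omega
      · rw [if_neg hev, Polynomial.coeff_zero]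
  · intro n
    rw [hcoeff n]
    split_ifs
    · exact Int.natCast_nonneg _
    · exact le_refl 0
end
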